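/- Contractivity of the behavior relative entropy under LOSR wirings: for any two no-signaling behaviors P, P' in the (r,s) Bell scenario and any LOSR wiring W from the (r,s) scenario to the (r_f,s_f) scenario, S_b(W(P)‖W(P')) ≤ S_b(P‖P'). -/

import Mathlib

open scoped ENNReal
open Finset

/-- A probability distribution on a finite type. -/
def IsDist {Z : Type*} [Fintype Z] (p : Z → ℝ) : Prop :=
  (∀ z, 0 ≤ p z) ∧ ∑ z, p z = 1

/-- Relative entropy (Kullback-Leibler divergence) of finitely supported
distributions, valued in `[0,∞]`, with the conventions `0·log(0/t) = 0` and
`S(p‖q) = ∞` whenever `q` vanishes at a point where `p` does not. -/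
noncomputable def relEnt {Z : Type*} [Fintype Z] (p q : Z → ℝ) : ℝ≥0∞ :=
  if ∃ z, p z ≠ 0 ∧ q z = 0 then ⊤
  else ENNReal.ofReal (∑ z, p z * Real.log (p z / q z))

/-- A behavior in the (r,s) Bell scenario: `P a b x y = P(a,b|x,y)`. -/
def IsBehavior {r s : ℕ} (P : Fin r → Fin r → Fin s → Fin s → ℝ) : Prop :=
  (∀ a b x y, 0 ≤ P a b x y) ∧ ∀ x y, ∑ a, ∑ b, P a b x y = 1

/-- The no-signaling conditions. -/
def NoSignaling {r s : ℕ} (P : Fin r → Fin r → Fin s → Fin s → ℝ) : Prop :=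
  (∀ b x x' y, ∑ a, P a b x y = ∑ a, P a b x' y) ∧
  (∀ a x y y', ∑ b, P a b x y = ∑ b, P a b x y')

/-- Local (local-hidden-variable) behavior. -/
def IsLocal {r s : ℕ} (P : Fin r → Fin r → Fin s → Fin s → ℝ) : Prop :=
  ∃ (n : ℕ) (q : Fin n → ℝ) (PA : Fin r → Fin s → Fin n → ℝ)
    (PB : Fin r → Fin s → Fin n → ℝ),
    IsDist q ∧
    (∀ x l, (∀ a, 0 ≤ PA a x l) ∧ ∑ a, PA a x l = 1) ∧
    (∀ y l, (∀ b, 0 ≤ PB b y l) ∧ ∑ b, PB b y l = 1) ∧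
    (∀ a b x y, P a b x y = ∑ l, q l * PA a x l * PB b y l)

/-- Output distribution `P(·,·|x,y)` of a behavior for fixed inputs. -/
def outDist {r s : ℕ} (P : Fin r → Fin r → Fin s → Fin s → ℝ) (x y : Fin s) :
    Fin r × Fin r → ℝ := fun ab => P ab.1 ab.2 x y

/-- The behavior relative entropy `S_b(P‖P')`: the maximum over input pairs
`(x,y)` of the relative entropy of the output distributions. -/
noncomputable def Sb {r s : ℕ} (P P' : Fin r → Fin r → Fin s → Fin s → ℝ) : ℝ≥0∞ :=
  Finset.univ.sup fun xy : Fin s × Fin s =>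
    relEnt (outDist P xy.1 xy.2) (outDist P' xy.1 xy.2)

/-- A global wiring from the (r,s) scenario to the (rf,sf) scenario. -/
structure GlobalWiring (r s rf sf : ℕ) where
  I : Fin s → Fin s → Fin sf → Fin sf → ℝ          -- I x y χ ψ  =  I(x,y|χ,ψ)
  O : Fin rf → Fin rf → Fin r → Fin r → Fin s → Fin s → Fin sf → Fin sf → ℝ
    -- O α β a b x y χ ψ  =  O(α,β|a,b,x,y,χ,ψ)
  I_nonneg : ∀ x y χ ψ, 0 ≤ I x y χ ψ
  I_sum : ∀ χ ψ, ∑ x, ∑ y, I x y χ ψ = 1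
  O_nonneg : ∀ α β a b x y χ ψ, 0 ≤ O α β a b x y χ ψ
  O_sum : ∀ a b x y χ ψ, ∑ α, ∑ β, O α β a b x y χ ψ = 1

/-- Action of a global wiring on a behavior. -/
noncomputable def GlobalWiring.apply {r s rf sf : ℕ} (W : GlobalWiring r s rf sf)
    (P : Fin r → Fin r → Fin s → Fin s → ℝ) :
    Fin rf → Fin rf → Fin sf → Fin sf → ℝ :=
  fun α β χ ψ => ∑ a, ∑ b, ∑ x, ∑ y,
    W.O α β a b x y χ ψ * P a b x y * W.I x y χ ψ

/-- LOSR wiring: a global wiring whose input and output boxes are local. -/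
def GlobalWiring.IsLOSR {r s rf sf : ℕ} (W : GlobalWiring r s rf sf) : Prop :=
  ∃ (n m : ℕ) (q : Fin n → ℝ) (q' : Fin m → ℝ)
    (IA : Fin s → Fin sf → Fin n → ℝ) (IB : Fin s → Fin sf → Fin n → ℝ)
    (OA : Fin rf → Fin r → Fin s → Fin sf → Fin m → ℝ)
    (OB : Fin rf → Fin r → Fin s → Fin sf → Fin m → ℝ),
    IsDist q ∧ IsDist q' ∧
    (∀ χ l, (∀ x, 0 ≤ IA x χ l) ∧ ∑ x, IA x χ l = 1) ∧
    (∀ ψ l, (∀ y, 0 ≤ IB y ψ l) ∧ ∑ y, IB y ψ l = 1) ∧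
    (∀ a x χ u, (∀ α, 0 ≤ OA α a x χ u) ∧ ∑ α, OA α a x χ u = 1) ∧
    (∀ b y ψ u, (∀ β, 0 ≤ OB β b y ψ u) ∧ ∑ β, OB β b y ψ u = 1) ∧
    (∀ x y χ ψ, W.I x y χ ψ = ∑ l, q l * IA x χ l * IB y ψ l) ∧
    (∀ α β a b x y χ ψ,
      W.O α β a b x y χ ψ = ∑ u, q' u * OA α a x χ u * OB β b y ψ u)

/-- UCLOSR wiring: a global wiring whose input and output boxes are products. -/
def GlobalWiring.IsUCLOSR {r s rf sf : ℕ} (W : GlobalWiring r s rf sf) : Prop :=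
  ∃ (IA : Fin s → Fin sf → ℝ) (IB : Fin s → Fin sf → ℝ)
    (OA : Fin rf → Fin r → Fin s → Fin sf → ℝ)
    (OB : Fin rf → Fin r → Fin s → Fin sf → ℝ),
    (∀ χ, (∀ x, 0 ≤ IA x χ) ∧ ∑ x, IA x χ = 1) ∧
    (∀ ψ, (∀ y, 0 ≤ IB y ψ) ∧ ∑ y, IB y ψ = 1) ∧
    (∀ a x χ, (∀ α, 0 ≤ OA α a x χ) ∧ ∑ α, OA α a x χ = 1) ∧
    (∀ b y ψ, (∀ β, 0 ≤ OB β b y ψ) ∧ ∑ β, OB β b y ψ = 1) ∧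
    (∀ x y χ ψ, W.I x y χ ψ = IA x χ * IB y ψ) ∧
    (∀ α β a b x y χ ψ, W.O α β a b x y χ ψ = OA α a x χ * OB β b y ψ)

/-- The relative entropy of nonlocality `S_nl`. -/
noncomputable def Snl {r s : ℕ} (P : Fin r → Fin r → Fin s → Fin s → ℝ) : ℝ≥0∞ :=
  ⨅ (Q : Fin r → Fin r → Fin s → Fin s → ℝ) (_ : IsBehavior Q ∧ IsLocal Q), Sb P Q

/-- The uniform-input statistical strength `S_u`. -/
noncomputable def Su {r s : ℕ} (P : Fin r → Fin r → Fin s → Fin s → ℝ) : ℝ≥0∞ :=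
  ⨅ (Q : Fin r → Fin r → Fin s → Fin s → ℝ) (_ : IsBehavior Q ∧ IsLocal Q),
    ((s : ℝ≥0∞) ^ 2)⁻¹ * ∑ x, ∑ y, relEnt (outDist P x y) (outDist Q x y)

/-- The uncorrelated-input statistical strength `S_uc`. -/
noncomputable def Suc {r s : ℕ} (P : Fin r → Fin r → Fin s → Fin s → ℝ) : ℝ≥0∞ :=
  ⨆ (DA : Fin s → ℝ) (DB : Fin s → ℝ) (_ : IsDist DA ∧ IsDist DB),
    ⨅ (Q : Fin r → Fin r → Fin s → Fin s → ℝ) (_ : IsBehavior Q ∧ IsLocal Q),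
      ∑ x, ∑ y, ENNReal.ofReal (DA x * DB y) *
        relEnt (outDist P x y) (outDist Q x y)

/-- contractivity of the behavior relative entropy under
LOSR wirings. -/
lemma logSum_aux {ι : Type*} [Fintype ι] (a b : ι → ℝ)
    (ha : ∀ i, 0 ≤ a i) (hb : ∀ i, 0 ≤ b i) (hab : ∀ i, b i = 0 → a i = 0) :
    (∑ i, a i) * Real.log ((∑ i, a i) / (∑ i, b i)) ≤
      ∑ i, a i * Real.log (a i / b i) := by
  set A := ∑ i, a i with hA
  set B := ∑ i, b i with hB
  by_cases hA0 : A = 0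
  · have hz : ∀ i, a i = 0 := fun i =>
      (Finset.sum_eq_zero_iff_of_nonneg (fun i _ => ha i)).mp hA0 i (mem_univ i)
    simp [hA0, hz]
  have hApos : 0 < A := lt_of_le_of_ne (Finset.sum_nonneg fun i _ => ha i) (Ne.symm hA0)
  have hBpos : 0 < B := by
    rcases lt_or_eq_of_le (Finset.sum_nonneg fun i _ => hb i) with h | h
    · exact h
    · exfalso
      have hz : ∀ i, b i = 0 := fun i =>
        (Finset.sum_eq_zero_iff_of_nonneg (fun i _ => hb i)).mp h.symm i (mem_univ i)
      have : ∀ i, a i = 0 := fun i => hab i (hz i)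
      exact hA0 (by simp [hA, this])
  have key : ∀ i, a i - b i * (A / B) ≤ a i * Real.log (a i / b i) - a i * Real.log (A / B) := by
    intro i
    rcases eq_or_lt_of_le (ha i) with h0 | hai
    · rw [← h0]
      have : 0 ≤ b i * (A / B) := mul_nonneg (hb i) (div_nonneg hApos.le hBpos.le)
      simp; linarith
    · have hbi : 0 < b i := by
        rcases eq_or_lt_of_le (hb i) with h0 | h; · exact absurd (hab i h0.symm) (ne_of_gt hai)
        exact h
      have hlog : 1 - (b i * A) / (a i * B) ≤ Real.log ((a i * B) / (b i * A)) := by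
        have h1 := Real.log_le_sub_one_of_pos (show (0:ℝ) < ((a i * B) / (b i * A))⁻¹ by positivity)
        rw [Real.log_inv] at h1
        rw [inv_div] at h1
        linarith
      have hmul := mul_le_mul_of_nonneg_left hlog hai.le
      have hexp : Real.log ((a i * B) / (b i * A)) =
          Real.log (a i / b i) - Real.log (A / B) := by
        rw [Real.log_div (by positivity) (by positivity), Real.log_mul (ne_of_gt hai) (ne_of_gt hBpos),
          Real.log_mul (ne_of_gt hbi) (ne_of_gt hApos),
          Real.log_div (ne_of_gt hai) (ne_of_gt hbi), Real.log_div (ne_of_gt hApos) (ne_of_gt hBpos)]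
        ring
      rw [hexp, mul_sub, mul_one] at hmul
      have harith : a i * (b i * A / (a i * B)) = b i * (A / B) := by
        field_simp
      nlinarith [hmul, harith]
  have hsum : ∑ i, (a i - b i * (A / B)) ≤
      ∑ i, (a i * Real.log (a i / b i) - a i * Real.log (A / B)) :=
    Finset.sum_le_sum fun i _ => key i
  have h1 : ∑ i, (a i - b i * (A / B)) = A - B * (A / B) := by
    rw [Finset.sum_sub_distrib, ← Finset.sum_mul]
  have h2 : ∑ i, (a i * Real.log (a i / b i) - a i * Real.log (A / B)) =
      (∑ i, a i * Real.log (a i / b i)) - A * Real.log (A / B) := by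
    rw [Finset.sum_sub_distrib, ← Finset.sum_mul]
  rw [h1, h2] at hsum
  have : B * (A / B) = A := by field_simp
  linarith

theorem Sb_contractive_LOSR {r s rf sf : ℕ}
    (P P' : Fin r → Fin r → Fin s → Fin s → ℝ)
    (hP : IsBehavior P) (hP' : IsBehavior P')
    (hPns : NoSignaling P) (hP'ns : NoSignaling P')
    (W : GlobalWiring r s rf sf) (hW : W.IsLOSR) :
    Sb (W.apply P) (W.apply P') ≤ Sb P P' := by
  classical
  by_cases habs : ∀ (x y : Fin s) (a b : Fin r), P' a b x y = 0 → P a b x y = 0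
  swap
  · -- Sb P P' = ⊤
    push_neg at habs
    obtain ⟨x, y, a, b, hz0, hz⟩ := habs
    have htop : relEnt (outDist P x y) (outDist P' x y) = ⊤ := by
      rw [relEnt, if_pos ⟨(a, b), hz, hz0⟩]
    have hSb : Sb P P' = ⊤ := by
      refine top_unique ?_
      rw [← htop]
      exact Finset.le_sup (f := fun xy : Fin s × Fin s =>
        relEnt (outDist P xy.1 xy.2) (outDist P' xy.1 xy.2)) (Finset.mem_univ (x, y))
    rw [hSb]
    exact le_top
  rw [Sb]
  apply Finset.sup_le
  rintro ⟨χ, ψ⟩ -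
  -- s ≠ 0
  have hs : s ≠ 0 := by
    rintro rfl
    simpa using W.I_sum χ ψ
  haveI : NeZero s := ⟨hs⟩
  -- notation
  set F : Fin rf × Fin rf → ((Fin r × Fin r) × Fin s × Fin s) → ℝ :=
    fun z w => W.O z.1 z.2 w.1.1 w.1.2 w.2.1 w.2.2 χ ψ *
      P w.1.1 w.1.2 w.2.1 w.2.2 * W.I w.2.1 w.2.2 χ ψ with hF
  set F' : Fin rf × Fin rf → ((Fin r × Fin r) × Fin s × Fin s) → ℝ :=
    fun z w => W.O z.1 z.2 w.1.1 w.1.2 w.2.1 w.2.2 χ ψ *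
      P' w.1.1 w.1.2 w.2.1 w.2.2 * W.I w.2.1 w.2.2 χ ψ with hF'
  have hM : ∀ z : Fin rf × Fin rf, outDist (W.apply P) χ ψ z = ∑ w, F z w := by
    intro z
    simp only [outDist, GlobalWiring.apply, hF, Fintype.sum_prod_type]
  have hM' : ∀ z : Fin rf × Fin rf, outDist (W.apply P') χ ψ z = ∑ w, F' z w := by
    intro z
    simp only [outDist, GlobalWiring.apply, hF', Fintype.sum_prod_type]
  have hFnn : ∀ z w, 0 ≤ F z w := fun z w =>
    mul_nonneg (mul_nonneg (W.O_nonneg _ _ _ _ _ _ _ _) (hP.1 _ _ _ _)) (W.I_nonneg _ _ _ _)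
  have hF'nn : ∀ z w, 0 ≤ F' z w := fun z w =>
    mul_nonneg (mul_nonneg (W.O_nonneg _ _ _ _ _ _ _ _) (hP'.1 _ _ _ _)) (W.I_nonneg _ _ _ _)
  have hFac : ∀ z w, F' z w = 0 → F z w = 0 := by
    intro z w h
    rcases mul_eq_zero.mp h with h | hI
    · rcases mul_eq_zero.mp h with hO | hPz
      · simp only [hF]; rw [hO]; ring
      · have : P w.1.1 w.1.2 w.2.1 w.2.2 = 0 := habs _ _ _ _ hPz
        simp only [hF]; rw [this]; ring
    · simp only [hF]; rw [hI]; ring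
  have habsW : ∀ z : Fin rf × Fin rf,
      outDist (W.apply P') χ ψ z = 0 → outDist (W.apply P) χ ψ z = 0 := by
    intro z h
    rw [hM' z] at h
    rw [hM z]
    refine Finset.sum_eq_zero fun w _ => ?_
    exact hFac z w
      ((Finset.sum_eq_zero_iff_of_nonneg fun w _ => hF'nn z w).mp h w (Finset.mem_univ w))
  -- LHS relEnt is finite
  rw [relEnt, if_neg (by push_neg; intro z hz; by_contra h; exact hz (habsW z (by simpa using h)))]
  -- D t
  set D : Fin s × Fin s → ℝ := fun t => ∑ p : Fin r × Fin r,
    P p.1 p.2 t.1 t.2 * Real.log (P p.1 p.2 t.1 t.2 / P' p.1 p.2 t.1 t.2) with hD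
  obtain ⟨t0, -, ht0⟩ := Finset.exists_mem_eq_sup' (Finset.univ_nonempty (α := Fin s × Fin s)) D
  set maxD := Finset.univ.sup' Finset.univ_nonempty D with hmaxD
  -- real chain
  have step1 : ∑ z : Fin rf × Fin rf,
      outDist (W.apply P) χ ψ z *
        Real.log (outDist (W.apply P) χ ψ z / outDist (W.apply P') χ ψ z) ≤
      ∑ z : Fin rf × Fin rf, ∑ w, F z w * Real.log (F z w / F' z w) := by
    refine Finset.sum_le_sum fun z _ => ?_
    rw [hM z, hM' z]
    exact logSum_aux (F z) (F' z) (hFnn z) (hF'nn z) (hFac z)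
  have step2 : ∀ z w, F z w * Real.log (F z w / F' z w) =
      F z w * Real.log (P w.1.1 w.1.2 w.2.1 w.2.2 / P' w.1.1 w.1.2 w.2.1 w.2.2) := by
    intro z w
    by_cases hO : W.O z.1 z.2 w.1.1 w.1.2 w.2.1 w.2.2 χ ψ = 0
    · have : F z w = 0 := by simp only [hF]; rw [hO]; ring
      rw [this]; ring
    by_cases hI : W.I w.2.1 w.2.2 χ ψ = 0
    · have : F z w = 0 := by simp only [hF]; rw [hI]; ring
      rw [this]; ring
    congr 2
    have e1 : F z w = P w.1.1 w.1.2 w.2.1 w.2.2 *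
        (W.O z.1 z.2 w.1.1 w.1.2 w.2.1 w.2.2 χ ψ * W.I w.2.1 w.2.2 χ ψ) := by
      simp only [hF]; ring
    have e2 : F' z w = P' w.1.1 w.1.2 w.2.1 w.2.2 *
        (W.O z.1 z.2 w.1.1 w.1.2 w.2.1 w.2.2 χ ψ * W.I w.2.1 w.2.2 χ ψ) := by
      simp only [hF']; ring
    rw [e1, e2, mul_div_mul_right _ _ (mul_ne_zero hO hI)]
  have hOsum : ∀ w : (Fin r × Fin r) × Fin s × Fin s,
      ∑ z : Fin rf × Fin rf, W.O z.1 z.2 w.1.1 w.1.2 w.2.1 w.2.2 χ ψ = 1 := by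
    intro w
    rw [Fintype.sum_prod_type]
    exact W.O_sum _ _ _ _ _ _
  have step3 : ∑ z : Fin rf × Fin rf, ∑ w, F z w *
      Real.log (P w.1.1 w.1.2 w.2.1 w.2.2 / P' w.1.1 w.1.2 w.2.1 w.2.2) =
      ∑ t : Fin s × Fin s, W.I t.1 t.2 χ ψ * D t := by
    rw [Finset.sum_comm]
    have : ∀ w : (Fin r × Fin r) × Fin s × Fin s, ∑ z : Fin rf × Fin rf,
        F z w * Real.log (P w.1.1 w.1.2 w.2.1 w.2.2 / P' w.1.1 w.1.2 w.2.1 w.2.2) =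
        P w.1.1 w.1.2 w.2.1 w.2.2 * W.I w.2.1 w.2.2 χ ψ *
          Real.log (P w.1.1 w.1.2 w.2.1 w.2.2 / P' w.1.1 w.1.2 w.2.1 w.2.2) := by
      intro w
      have : ∀ z : Fin rf × Fin rf, F z w *
          Real.log (P w.1.1 w.1.2 w.2.1 w.2.2 / P' w.1.1 w.1.2 w.2.1 w.2.2) =
          W.O z.1 z.2 w.1.1 w.1.2 w.2.1 w.2.2 χ ψ *
          (P w.1.1 w.1.2 w.2.1 w.2.2 * W.I w.2.1 w.2.2 χ ψ *
            Real.log (P w.1.1 w.1.2 w.2.1 w.2.2 / P' w.1.1 w.1.2 w.2.1 w.2.2)) := by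
        intro z; simp only [hF]; ring
      rw [Finset.sum_congr rfl fun z _ => this z, ← Finset.sum_mul, hOsum w, one_mul]
    rw [Finset.sum_congr rfl fun w _ => this w]
    rw [Fintype.sum_prod_type]
    rw [Finset.sum_comm]
    refine Finset.sum_congr rfl fun t _ => ?_
    simp only [hD, Finset.mul_sum]
    refine Finset.sum_congr rfl fun p _ => ?_
    ring
  have hIsum : ∑ t : Fin s × Fin s, W.I t.1 t.2 χ ψ = 1 := by
    rw [Fintype.sum_prod_type]
    exact W.I_sum χ ψ
  have step4 : ∑ t : Fin s × Fin s, W.I t.1 t.2 χ ψ * D t ≤ maxD := by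
    calc ∑ t : Fin s × Fin s, W.I t.1 t.2 χ ψ * D t
        ≤ ∑ t : Fin s × Fin s, W.I t.1 t.2 χ ψ * maxD :=
          Finset.sum_le_sum fun t _ => mul_le_mul_of_nonneg_left
            (Finset.le_sup' D (Finset.mem_univ t)) (W.I_nonneg _ _ _ _)
      _ = maxD := by rw [← Finset.sum_mul, hIsum, one_mul]
  have hreal : ∑ z : Fin rf × Fin rf,
      outDist (W.apply P) χ ψ z *
        Real.log (outDist (W.apply P) χ ψ z / outDist (W.apply P') χ ψ z) ≤ maxD := by
    calc _ ≤ ∑ z : Fin rf × Fin rf, ∑ w, F z w * Real.log (F z w / F' z w) := step1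
      _ = ∑ z : Fin rf × Fin rf, ∑ w, F z w *
            Real.log (P w.1.1 w.1.2 w.2.1 w.2.2 / P' w.1.1 w.1.2 w.2.1 w.2.2) := by
          exact Finset.sum_congr rfl fun z _ => Finset.sum_congr rfl fun w _ => step2 z w
      _ = ∑ t : Fin s × Fin s, W.I t.1 t.2 χ ψ * D t := step3
      _ ≤ maxD := step4
  -- conclude in ℝ≥0∞
  refine le_trans (ENNReal.ofReal_le_ofReal hreal) ?_
  have hrel : relEnt (outDist P t0.1 t0.2) (outDist P' t0.1 t0.2) = ENNReal.ofReal (D t0) := by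
    rw [relEnt, if_neg]
    · rfl
    · push_neg
      intro z hz
      by_contra h
      exact hz (habs _ _ _ _ (by simpa [outDist] using h))
  calc ENNReal.ofReal maxD = relEnt (outDist P t0.1 t0.2) (outDist P' t0.1 t0.2) := by
        rw [hrel, ht0]
    _ ≤ Sb P P' := Finset.le_sup (f := fun xy : Fin s × Fin s =>
        relEnt (outDist P xy.1 xy.2) (outDist P' xy.1 xy.2)) (Finset.mem_univ t0)
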